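/- Let T be a tree with the fine wedge topology and x ∈ T. The sets (↑x) \ ↑F, where F ranges over finite subsets of the set I(x) of immediate successors of x, form a neighborhood base at x. -/

import Mathlib

universe u

/-- A partial order is a tree if the set of strict predecessors of every point
is well-ordered by `<`. -/
def IsTree (T : Type u) [PartialOrder T] : Prop :=
  ∀ x : T, IsWellOrder {y : T // y < x} (fun a b => (a : T) < (b : T))
/-- The fine wedge topology on a tree: generated by the cones `↑t = Set.Ici t`
and their complements. -/
def fineWedge (T : Type u) [PartialOrder T] : TopologicalSpace T :=
  TopologicalSpace.generateFrom
    ({s | ∃ t : T, s = Set.Ici t} ∪ {s | ∃ t : T, s = (Set.Ici t)ᶜ})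

/-- In a tree, below any element strictly above `x` there is an immediate
successor of `x`. -/
lemma exists_covBy_le {T : Type u} [PartialOrder T] (hT : IsTree T) {x t : T}
    (hxt : x < t) : ∃ y : T, x ⋖ y ∧ y ≤ t := by
  by_cases hS : ∃ z : T, x < z ∧ z < t
  · have wf := (hT t).wf
    set S : Set {y : T // y < t} := {y | x < (y : T)} with hSdef
    have hne : S.Nonempty := by
      obtain ⟨z, hz1, hz2⟩ := hS
      exact ⟨⟨z, hz2⟩, hz1⟩
    obtain ⟨y₀, hy₀S, hy₀min⟩ := wf.has_min S hne
    refine ⟨(y₀ : T), ⟨hy₀S, ?_⟩, le_of_lt y₀.2⟩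
    intro c hxc hcy
    exact hy₀min ⟨c, lt_trans hcy y₀.2⟩ hxc hcy
  · refine ⟨t, ⟨hxt, ?_⟩, le_refl t⟩
    intro c hxc hct
    exact hS ⟨c, hxc, hct⟩

theorem stmt_14 (T : Type u) [PartialOrder T] (hT : IsTree T) (x : T) :
    -- each set `↑x \ ↑F`, with `F` a finite set of immediate successors of `x`,
    -- is a neighborhood of `x`, and these sets form a neighborhood base at `x`
    (∀ F : Set T, F ⊆ {y : T | x ⋖ y} → F.Finite →
      (Set.Ici x \ ⋃ y ∈ F, Set.Ici y) ∈ @nhds T (fineWedge T) x) ∧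
    (∀ U ∈ @nhds T (fineWedge T) x,
      ∃ F : Set T, F ⊆ {y : T | x ⋖ y} ∧ F.Finite ∧
        Set.Ici x \ ⋃ y ∈ F, Set.Ici y ⊆ U) := by
  letI : TopologicalSpace T := fineWedge T
  constructor
  · intro F hF hFfin
    have hopen : IsOpen (Set.Ici x \ ⋃ y ∈ F, Set.Ici y) := by
      apply IsOpen.sdiff
      · exact TopologicalSpace.GenerateOpen.basic _ (Or.inl ⟨x, rfl⟩)
      · apply Set.Finite.isClosed_biUnion hFfin
        intro y _
        have : IsOpen (Set.Ici y)ᶜ :=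
          TopologicalSpace.GenerateOpen.basic _ (Or.inr ⟨y, rfl⟩)
        simpa [isClosed_compl_iff] using this.isClosed_compl
    apply hopen.mem_nhds
    refine ⟨Set.mem_Ici.mpr le_rfl, ?_⟩
    intro hx
    simp only [Set.mem_iUnion] at hx
    obtain ⟨y, hyF, hxy⟩ := hx
    exact absurd (Set.mem_Ici.mp hxy) (not_le_of_gt (hF hyF).1)
  · intro U hU
    obtain ⟨V, hVU, hVopen, hxV⟩ := mem_nhds_iff.mp hU
    suffices h : ∀ V : Set T, TopologicalSpace.GenerateOpen
        ({s | ∃ t : T, s = Set.Ici t} ∪ {s | ∃ t : T, s = (Set.Ici t)ᶜ}) V →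
        ∀ x : T, x ∈ V →
        ∃ F : Set T, F ⊆ {y : T | x ⋖ y} ∧ F.Finite ∧
          Set.Ici x \ ⋃ y ∈ F, Set.Ici y ⊆ V by
      obtain ⟨F, h1, h2, h3⟩ := h V hVopen x hxV
      exact ⟨F, h1, h2, h3.trans hVU⟩
    intro V hV
    induction hV with
    | basic s hs =>
      intro x hxs
      rcases hs with ⟨t, rfl⟩ | ⟨t, rfl⟩
      · -- s = Ici t, t ≤ x
        exact ⟨∅, by simp, Set.finite_empty, by
          intro z hz
          simp only [Set.mem_iUnion, Set.mem_empty_iff_false] at hz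
          exact le_trans (Set.mem_Ici.mp hxs) hz.1⟩
      · -- s = (Ici t)ᶜ, ¬ t ≤ x
        have htx : ¬ t ≤ x := hxs
        by_cases hxt : x < t
        · obtain ⟨y, hxy, hyt⟩ := exists_covBy_le hT hxt
          refine ⟨{y}, by simpa using hxy, Set.finite_singleton y, ?_⟩
          intro z ⟨hz1, hz2⟩ htz
          apply hz2
          simp only [Set.mem_iUnion, Set.mem_singleton_iff]
          exact ⟨y, rfl, le_trans hyt htz⟩
        · -- x and t incomparable: Ici x ∩ Ici t = ∅
          refine ⟨∅, by simp, Set.finite_empty, ?_⟩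
          intro z ⟨hz1, _⟩ htz
          -- z ≥ x and z ≥ t, predecessors of z totally ordered
          have hxz : x ≤ z := hz1
          have htz' : t ≤ z := htz
          rcases eq_or_lt_of_le hxz with rfl | hxz'
          · exact htx htz'
          rcases eq_or_lt_of_le htz' with rfl | htz''
          · exact hxt (lt_of_le_of_ne hxz (fun h => htx (le_of_eq h.symm)))
          · haveI := hT z
            rcases trichotomous_of (fun a b : {y : T // y < z} => (a : T) < (b : T)) ⟨x, hxz'⟩ ⟨t, htz''⟩ with h | h | h
            · exact hxt h
            · exact htx (le_of_eq (congrArg Subtype.val h).symm)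
            · exact htx (le_of_lt h)
    | univ =>
      intro x _
      exact ⟨∅, by simp, Set.finite_empty, fun z _ => Set.mem_univ z⟩
    | inter s₁ s₂ _ _ ih₁ ih₂ =>
      intro x hx
      obtain ⟨F₁, h1a, h1b, h1c⟩ := ih₁ x hx.1
      obtain ⟨F₂, h2a, h2b, h2c⟩ := ih₂ x hx.2
      refine ⟨F₁ ∪ F₂, Set.union_subset h1a h2a, h1b.union h2b, ?_⟩
      intro z ⟨hz1, hz2⟩
      simp only [Set.mem_iUnion, not_exists, Set.mem_union] at hz2
      constructor
      · apply h1c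
        refine ⟨hz1, ?_⟩
        simp only [Set.mem_iUnion, not_exists]
        exact fun y hy => hz2 y (Or.inl hy)
      · apply h2c
        refine ⟨hz1, ?_⟩
        simp only [Set.mem_iUnion, not_exists]
        exact fun y hy => hz2 y (Or.inr hy)
    | sUnion S _ ih =>
      intro x hx
      obtain ⟨s, hsS, hxs⟩ := hx
      obtain ⟨F, ha, hb, hc⟩ := ih s hsS x hxs
      exact ⟨F, ha, hb, fun z hz => ⟨s, hsS, hc hz⟩⟩
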